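/- Let ρ ∈ E be nonzero and let K > 0. Then there exist C > 0 and θ₀ ∈ (0,1) such that for every θ ∈ (0, θ₀] and all vectors a, b ∈ E satisfying ‖a‖ ≥ θ^{−2}, ‖a − b‖ ≤ K, and ∠(a, ρ) ≤ θ, one has ‖ b/‖b‖ − ρ/‖ρ‖ ‖ ≤ C·θ (note that b ≠ 0 under these hypotheses). -/

import Mathlib

open RealInnerProductSpace

/-- If `ρ ≠ 0` and `K > 0`, then there are `C > 0` and `θ₀ ∈ (0,1)` such that for all
`θ ∈ (0, θ₀]` and all `a, b` with `‖a‖ ≥ θ⁻²`, `‖a - b‖ ≤ K` and `∠(a,ρ) ≤ θ`, one has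
`‖b/‖b‖ − ρ/‖ρ‖‖ ≤ Cθ`. -/
theorem normalized_close_to_direction {E : Type*} [NormedAddCommGroup E]
    [InnerProductSpace ℝ E] [FiniteDimensional ℝ E]
    (ρ : E) (hρ : ρ ≠ 0) (K : ℝ) (hK : 0 < K) :
    ∃ C > (0 : ℝ), ∃ θ₀ ∈ Set.Ioo (0 : ℝ) 1, ∀ θ ∈ Set.Ioc (0 : ℝ) θ₀, ∀ a b : E,
      θ ^ (-2 : ℤ) ≤ ‖a‖ → ‖a - b‖ ≤ K → InnerProductGeometry.angle a ρ ≤ θ →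
      ‖(‖b‖⁻¹ • b) - (‖ρ‖⁻¹ • ρ)‖ ≤ C * θ := by
  refine ⟨1 + 4 * K, by linarith, (2 * K + 2)⁻¹,
    ⟨by positivity, by rw [inv_lt_one_iff₀]; right; linarith⟩, ?_⟩
  rintro θ ⟨hθ0, hθ1⟩ a b ha hab hang
  have hθ0' : (0 : ℝ) < θ := hθ0
  have hθle1 : θ ≤ 1 := by
    calc θ ≤ (2 * K + 2)⁻¹ := hθ1
    _ ≤ 1 := by rw [inv_le_one_iff₀]; right; linarith
  -- lower bound on ‖a‖
  have hna : 2 * K + 2 ≤ ‖a‖ := by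
    have h1 : (2 * K + 2) ≤ θ⁻¹ := by
      rw [le_inv_comm₀ (by linarith) hθ0']; exact hθ1
    have h2 : θ⁻¹ ≤ θ ^ (-2 : ℤ) := by
      rw [zpow_neg, ← zpow_one θ⁻¹, ← inv_zpow]
      exact zpow_le_zpow_right₀ (by rw [le_inv_comm₀ one_pos hθ0']; simpa using hθle1)
        (by norm_num)
    linarith
  have hNa : (0:ℝ) < ‖a‖ := by linarith
  have habs : |‖a‖ - ‖b‖| ≤ K := le_trans (abs_norm_sub_norm_le a b) hab
  have hnb : ‖a‖ - K ≤ ‖b‖ := by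
    have := abs_le.mp habs; linarith [this.2]
  have hNb : (0:ℝ) < ‖b‖ := by linarith
  have hb : b ≠ 0 := fun h => by simp [h] at hNb
  -- step 1 : normalized a close to normalized ρ
  have hang0 := InnerProductGeometry.angle_nonneg a ρ
  have hcos : Real.cos θ ≤ Real.cos (InnerProductGeometry.angle a ρ) :=
    Real.cos_le_cos_of_nonneg_of_le_pi hang0 (le_trans hθle1 (by linarith [Real.pi_gt_three]))
      hang
  have hcos2 : 1 - θ ^ 2 / 2 ≤ Real.cos (InnerProductGeometry.angle a ρ) :=
    le_trans (Real.one_sub_sq_div_two_le_cos) hcos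
  have hNρ : (0:ℝ) < ‖ρ‖ := norm_pos_iff.mpr hρ
  have hinner : ⟪(‖a‖⁻¹ • a), (‖ρ‖⁻¹ • ρ)⟫ = Real.cos (InnerProductGeometry.angle a ρ) := by
    rw [real_inner_smul_left, real_inner_smul_right, InnerProductGeometry.cos_angle]
    field_simp
  have hua : ‖(‖a‖⁻¹ • a)‖ = 1 := norm_smul_inv_norm (norm_pos_iff.mp hNa)
  have hur : ‖(‖ρ‖⁻¹ • ρ)‖ = 1 := norm_smul_inv_norm hρ
  have hsq : ‖(‖a‖⁻¹ • a) - (‖ρ‖⁻¹ • ρ)‖ ^ 2 ≤ θ ^ 2 := by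
    rw [@norm_sub_sq_real, hinner, hua, hur]
    nlinarith
  have step1 : ‖(‖a‖⁻¹ • a) - (‖ρ‖⁻¹ • ρ)‖ ≤ θ := by
    nlinarith [norm_nonneg ((‖a‖⁻¹ • a) - (‖ρ‖⁻¹ • ρ))]
  -- step 2 : normalized b close to normalized a
  have hdecomp : (‖b‖⁻¹ • b) - (‖a‖⁻¹ • a)
      = ‖b‖⁻¹ • (b - a) + (‖b‖⁻¹ - ‖a‖⁻¹) • a := by
    rw [smul_sub, sub_smul]; abel
  have hterm1 : ‖(‖b‖⁻¹ : ℝ) • (b - a)‖ ≤ K / ‖b‖ := by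
    rw [norm_smul, Real.norm_eq_abs, abs_of_pos (inv_pos.mpr hNb)]
    rw [div_eq_inv_mul]
    gcongr
    rw [norm_sub_rev]; exact hab
  have hterm2 : ‖((‖b‖⁻¹ - ‖a‖⁻¹ : ℝ)) • a‖ ≤ K / ‖b‖ := by
    rw [norm_smul, Real.norm_eq_abs]
    have : |‖b‖⁻¹ - ‖a‖⁻¹| = |‖a‖ - ‖b‖| / (‖a‖ * ‖b‖) := by
      rw [← abs_of_pos (mul_pos hNa hNb), ← abs_div]
      congr 1
      rw [inv_sub_inv hNb.ne' hNa.ne', mul_comm]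
    rw [this]
    calc |‖a‖ - ‖b‖| / (‖a‖ * ‖b‖) * ‖a‖ = |‖a‖ - ‖b‖| / ‖b‖ := by
          field_simp
      _ ≤ K / ‖b‖ := by gcongr
  have step2 : ‖(‖b‖⁻¹ • b) - (‖a‖⁻¹ • a)‖ ≤ 2 * K / ‖b‖ := by
    rw [hdecomp]
    calc ‖(‖b‖⁻¹:ℝ) • (b - a) + ((‖b‖⁻¹ - ‖a‖⁻¹:ℝ)) • a‖
        ≤ ‖(‖b‖⁻¹:ℝ) • (b - a)‖ + ‖((‖b‖⁻¹ - ‖a‖⁻¹:ℝ)) • a‖ := norm_add_le _ _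
      _ ≤ K / ‖b‖ + K / ‖b‖ := add_le_add hterm1 hterm2
      _ = 2 * K / ‖b‖ := by ring
  have hbhalf : ‖a‖ / 2 ≤ ‖b‖ := by linarith
  have step2' : ‖(‖b‖⁻¹ • b) - (‖a‖⁻¹ • a)‖ ≤ 4 * K / ‖a‖ := by
    refine step2.trans ?_
    rw [div_le_div_iff₀ hNb hNa]
    nlinarith
  have hθsq : 4 * K / ‖a‖ ≤ 4 * K * θ ^ 2 := by
    have h2 : (θ ^ 2)⁻¹ ≤ ‖a‖ := by
      rw [show ((-2:ℤ) = -(2:ℤ)) from rfl, zpow_neg] at ha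
      simpa using ha
    rw [div_le_iff₀ hNa]
    calc 4 * K = 4 * K * θ ^ 2 * (θ ^ 2)⁻¹ := by field_simp
      _ ≤ 4 * K * θ ^ 2 * ‖a‖ := by gcongr
  -- combine
  calc ‖(‖b‖⁻¹ • b) - (‖ρ‖⁻¹ • ρ)‖
      ≤ ‖(‖b‖⁻¹ • b) - (‖a‖⁻¹ • a)‖ + ‖(‖a‖⁻¹ • a) - (‖ρ‖⁻¹ • ρ)‖ :=
        norm_sub_le_norm_sub_add_norm_sub _ _ _
    _ ≤ 4 * K * θ ^ 2 + θ := add_le_add (step2'.trans hθsq) step1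
    _ ≤ (1 + 4 * K) * θ := by nlinarith [mul_nonneg (mul_nonneg hK.le hθ0'.le) (sub_nonneg.mpr hθle1)]
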